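/- Let K be a field of characteristic zero and let A be an essential line arrangement in P² over K. Suppose there exist H ∈ A and an intersection point p of A lying on H such that m^H(p) ≥ |A|/2, where m^H(p) denotes the number of lines of A \ {H} passing through p. Then n₂(A) > 0, i.e., A has at least one double point. -/
import Mathlib


/-! Basic setup: the projective plane over a field `K` is modelled by linear
subspaces of `K³ = Fin 3 → K`: projective points are 1-dimensional subspaces
and projective lines are 2-dimensional subspaces; incidence is inclusion. -/

variable (K : Type*) [Field K]

/-- A point of `P²`: a 1-dimensional linear subspace of `K³`. -/
def IsPoint (p : Submodule K (Fin 3 → K)) : Prop :=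
  Module.finrank K p = 1

/-- A line of `P²`: a 2-dimensional linear subspace of `K³`. -/
def IsLine (H : Submodule K (Fin 3 → K)) : Prop :=
  Module.finrank K H = 2

/-- A line arrangement: a finite set of lines in `P²`. -/
def IsArrangement (A : Finset (Submodule K (Fin 3 → K))) : Prop :=
  ∀ H ∈ A, IsLine K H

/-- An arrangement is essential if its lines have no common point. -/
def Essential (A : Finset (Submodule K (Fin 3 → K))) : Prop :=
  ¬ ∃ p : Submodule K (Fin 3 → K), IsPoint K p ∧ ∀ H ∈ A, p ≤ H

/-- The multiplicity of a point `p`: the number of lines of `A` passing through `p`. -/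
noncomputable def mult (A : Finset (Submodule K (Fin 3 → K)))
    (p : Submodule K (Fin 3 → K)) : ℕ :=
  {H ∈ (A : Set (Submodule K (Fin 3 → K))) | p ≤ H}.ncard

/-- An intersection point of `A`: a point lying on at least two lines of `A`. -/
def IsIntersectionPoint (A : Finset (Submodule K (Fin 3 → K)))
    (p : Submodule K (Fin 3 → K)) : Prop :=
  IsPoint K p ∧ 2 ≤ mult K A p

/-- A double point of `A`: a point lying on exactly two lines of `A`. -/
def IsDoublePoint (A : Finset (Submodule K (Fin 3 → K)))
    (p : Submodule K (Fin 3 → K)) : Prop :=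
  IsPoint K p ∧ mult K A p = 2

/-- `n₂(A)`: the number of double points of `A`. -/
noncomputable def n2 (A : Finset (Submodule K (Fin 3 → K))) : ℕ :=
  {p | IsDoublePoint K A p}.ncard

/-- `n₂(H)`: the number of double points of `A` lying on the line `H`. -/
noncomputable def n2on (A : Finset (Submodule K (Fin 3 → K)))
    (H : Submodule K (Fin 3 → K)) : ℕ :=
  {p | IsDoublePoint K A p ∧ p ≤ H}.ncard

/-- `|A^H|`: the number of intersection points of `A` lying on the line `H`. -/
noncomputable def pointsOn (A : Finset (Submodule K (Fin 3 → K)))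
    (H : Submodule K (Fin 3 → K)) : ℕ :=
  {p | IsIntersectionPoint K A p ∧ p ≤ H}.ncard

/-- `p` is a modular point of `A`: an intersection point such that for all distinct
lines `H, L` of `A` not passing through `p`, the point `H ∩ L` lies on some line
of `A` through `p`. -/
def IsModular (A : Finset (Submodule K (Fin 3 → K)))
    (p : Submodule K (Fin 3 → K)) : Prop :=
  IsIntersectionPoint K A p ∧
    ∀ H ∈ A, ∀ L ∈ A, ¬ p ≤ H → ¬ p ≤ L → H ≠ L →
      ∃ K' ∈ A, p ≤ K' ∧ H ⊓ L ≤ K'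

/-- An arrangement is supersolvable if it has a modular point. -/
def Supersolvable (A : Finset (Submodule K (Fin 3 → K))) : Prop :=
  ∃ p, IsModular K A p


section Aux
variable {K}

lemma finrank_inf_of_ne {M L : Submodule K (Fin 3 → K)} (hM : IsLine K M) (hL : IsLine K L)
    (hne : M ≠ L) : Module.finrank K ↥(M ⊓ L) = 1 := by
  have h3 : Module.finrank K (Fin 3 → K) = 3 := by simp
  have hsum := Submodule.finrank_sup_add_finrank_inf_eq M L
  have hle : Module.finrank K ↥(M ⊔ L) ≤ 3 := by
    have := Submodule.finrank_le (M ⊔ L); rwa [h3] at this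
  have hge : Module.finrank K ↥M ≤ Module.finrank K ↥(M ⊔ L) := Submodule.finrank_mono le_sup_left
  have : Module.finrank K ↥(M ⊔ L) = 3 := by
    rcases lt_or_eq_of_le hle with h | h
    · exfalso
      have hM2 : M = M ⊔ L := Submodule.eq_of_le_of_finrank_le le_sup_left (by rw [hM]; omega)
      have : L ≤ M := hM2 ▸ le_sup_right
      exact hne (Submodule.eq_of_le_of_finrank_le this (by rw [hM, hL])).symm
    · exact h
  rw [hM, hL] at hsum; omega

lemma point_eq_inf {q M L : Submodule K (Fin 3 → K)} (hq : IsPoint K q)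
    (hM : IsLine K M) (hL : IsLine K L) (hne : M ≠ L) (hqM : q ≤ M) (hqL : q ≤ L) :
    q = M ⊓ L :=
  Submodule.eq_of_le_of_finrank_le (le_inf hqM hqL)
    (by rw [hq, finrank_inf_of_ne hM hL hne])

lemma point_unique {q q' M L : Submodule K (Fin 3 → K)} (hq : IsPoint K q) (hq' : IsPoint K q')
    (hM : IsLine K M) (hL : IsLine K L) (hne : M ≠ L)
    (hqM : q ≤ M) (hqL : q ≤ L) (h1 : q' ≤ M) (h2 : q' ≤ L) : q = q' := by
  rw [point_eq_inf hq hM hL hne hqM hqL, point_eq_inf hq' hM hL hne h1 h2]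

lemma mult_eq_filter_card [DecidableEq (Submodule K (Fin 3 → K))]
    (A : Finset (Submodule K (Fin 3 → K))) (p : Submodule K (Fin 3 → K))
    [DecidablePred fun M : Submodule K (Fin 3 → K) => p ≤ M] :
    mult K A p = (A.filter (fun M => p ≤ M)).card := by
  classical
  rw [mult, show {H ∈ (A : Set (Submodule K (Fin 3 → K))) | p ≤ H}
      = ↑(A.filter (fun M => p ≤ M)) by ext x; simp, Set.ncard_coe_finset]

end Aux


/-- **Theorem.** Let `A` be an essential line arrangement over a field of
characteristic zero.  If there exist `H ∈ A` and an intersection point `p` of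
`A` on `H` such that the number `m^H(p)` of lines of `A \ {H}` through `p` is
at least `|A|/2`, then `n₂(A) > 0`. -/
theorem n2_pos_of_big_multiplicity
    (K : Type*) [Field K] [CharZero K]
    (A : Finset (Submodule K (Fin 3 → K)))
    (hA : IsArrangement K A) (hess : Essential K A)
    [DecidableEq (Submodule K (Fin 3 → K))]
    (H : Submodule K (Fin 3 → K)) (hH : H ∈ A)
    (p : Submodule K (Fin 3 → K))
    (hp : IsIntersectionPoint K A p) (hpH : p ≤ H)
    (hbig : (A.card : ℚ) / 2 ≤ (mult K (A.erase H) p : ℚ)) :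
    0 < n2 K A := by
  classical
  have hPoint : IsPoint K p := hp.1
  obtain ⟨L, hLA, hpL⟩ : ∃ L ∈ A, ¬ p ≤ L := by
    by_contra h; push_neg at h; exact hess ⟨p, hPoint, h⟩
  set T := A.filter (fun M => p ≤ M) with hTdef
  have hHT : H ∈ T := Finset.mem_filter.mpr ⟨hH, hpH⟩
  have hTcard : T.card = mult K (A.erase H) p + 1 := by
    rw [mult_eq_filter_card, Finset.filter_erase, ← hTdef, Finset.card_erase_of_mem hHT]
    have := Finset.card_pos.mpr ⟨H, hHT⟩; omega
  have hmn : A.card ≤ mult K (A.erase H) p * 2 := by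
    rw [div_le_iff₀ (by norm_num : (0:ℚ) < 2)] at hbig
    exact_mod_cast hbig
  have hexists : ∃ q, IsDoublePoint K A q := by
    by_contra hnd
    push_neg at hnd
    -- facts about lines through p
    have hTfacts : ∀ M ∈ T, M ∈ A ∧ p ≤ M ∧ M ≠ L := by
      intro M hM
      obtain ⟨hMA, hpM⟩ := Finset.mem_filter.mp hM
      exact ⟨hMA, hpM, fun h => hpL (h ▸ hpM)⟩
    have hqpt : ∀ M ∈ T, IsPoint K (M ⊓ L) := by
      intro M hM
      obtain ⟨hMA, _, hML⟩ := hTfacts M hM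
      exact finrank_inf_of_ne (hA M hMA) (hA L hLA) hML
    have key : ∀ M ∈ T, 3 ≤ (A.filter (fun N => M ⊓ L ≤ N)).card := by
      intro M hM
      obtain ⟨hMA, hpM, hML⟩ := hTfacts M hM
      have h2 : 1 < (A.filter (fun N => M ⊓ L ≤ N)).card := by
        apply Finset.one_lt_card.mpr
        exact ⟨M, Finset.mem_filter.mpr ⟨hMA, inf_le_left⟩,
               L, Finset.mem_filter.mpr ⟨hLA, inf_le_right⟩, hML⟩
      have hip : IsIntersectionPoint K A (M ⊓ L) := by
        refine ⟨hqpt M hM, ?_⟩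
        rw [mult_eq_filter_card]; omega
      have hne2 : mult K A (M ⊓ L) ≠ 2 := fun h => hnd (M ⊓ L) ⟨hqpt M hM, h⟩
      rw [mult_eq_filter_card] at hne2
      have := mult_eq_filter_card (K := K) A (M ⊓ L)
      omega
    set G : Submodule K (Fin 3 → K) → Finset (Submodule K (Fin 3 → K)) :=
      fun M => (A.filter (fun N => M ⊓ L ≤ N)).erase L with hGdef
    have hGcard : ∀ M ∈ T, 2 ≤ (G M).card := by
      intro M hM
      have hLmem : L ∈ A.filter (fun N => M ⊓ L ≤ N) :=
        Finset.mem_filter.mpr ⟨hLA, inf_le_right⟩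
      rw [hGdef]; simp only []
      rw [Finset.card_erase_of_mem hLmem]
      have := key M hM; omega
    -- pairwise disjointness
    have hdisj : ∀ M ∈ (T : Set _), ∀ M' ∈ (T : Set _), M ≠ M' → Disjoint (G M) (G M') := by
      intro M hM M' hM' hMM'
      rw [Finset.mem_coe] at hM hM'
      rw [Finset.disjoint_left]
      intro N hN hN'
      obtain ⟨hMA, hpM, hML⟩ := hTfacts M hM
      obtain ⟨hM'A, hpM', hM'L⟩ := hTfacts M' hM'
      have hNL : N ≠ L := Finset.ne_of_mem_erase hN
      have hNA : N ∈ A := (Finset.mem_filter.mp (Finset.mem_of_mem_erase hN)).1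
      have hq1 : M ⊓ L ≤ N := (Finset.mem_filter.mp (Finset.mem_of_mem_erase hN)).2
      have hq2 : M' ⊓ L ≤ N := (Finset.mem_filter.mp (Finset.mem_of_mem_erase hN')).2
      have hqq : M ⊓ L = M' ⊓ L :=
        point_unique (hqpt M hM) (hqpt M' hM') (hA N hNA) (hA L hLA) hNL
          hq1 inf_le_right hq2 inf_le_right
      -- then p = M ⊓ L lies on L, contradiction
      have hpq : p = M ⊓ L :=
        point_unique hPoint (hqpt M hM) (hA M hMA) (hA M' hM'A) hMM'
          hpM hpM' inf_le_left (hqq ▸ inf_le_left)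
      exact hpL (hpq ▸ inf_le_right (a := M))
    -- counting
    have hsub : T.biUnion G ⊆ A.erase L := by
      intro N hN
      obtain ⟨M, _, hNG⟩ := Finset.mem_biUnion.mp hN
      exact Finset.mem_of_subset
        (Finset.erase_subset_erase L (Finset.filter_subset _ _)) hNG
    have hcount : 2 * T.card ≤ (T.biUnion G).card := by
      rw [Finset.card_biUnion hdisj]
      calc 2 * T.card = ∑ _M ∈ T, 2 := by rw [Finset.sum_const, smul_eq_mul, mul_comm]
        _ ≤ ∑ M ∈ T, (G M).card := Finset.sum_le_sum hGcard
    have hle : (T.biUnion G).card ≤ A.card - 1 := by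
      calc (T.biUnion G).card ≤ (A.erase L).card := Finset.card_le_card hsub
        _ = A.card - 1 := Finset.card_erase_of_mem hLA
    have hApos : 1 ≤ A.card := Finset.card_pos.mpr ⟨H, hH⟩
    omega
  -- finiteness of the set of double points
  have hfin : {q | IsDoublePoint K A q}.Finite := by
    apply Set.Finite.subset (Set.Finite.image2 (· ⊓ ·) A.finite_toSet A.finite_toSet)
    rintro q ⟨hqpt, hm⟩
    rw [mult_eq_filter_card] at hm
    obtain ⟨M, N, hMN, hset⟩ := Finset.card_eq_two.mp hm
    have hM : M ∈ A.filter (fun M => q ≤ M) := by rw [hset]; simp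
    have hN : N ∈ A.filter (fun M => q ≤ M) := by rw [hset]; simp
    obtain ⟨hMA, hqM⟩ := Finset.mem_filter.mp hM
    obtain ⟨hNA, hqN⟩ := Finset.mem_filter.mp hN
    exact ⟨M, hMA, N, hNA,
      (point_eq_inf hqpt (hA M hMA) (hA N hNA) hMN hqM hqN).symm⟩
  obtain ⟨q, hq⟩ := hexists
  unfold n2
  rw [Set.ncard_pos hfin]
  exact ⟨q, hq⟩
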